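/- arXiv:math/0605712 — 3 statements merged into one kernel-verified Lean document; each statement's English description precedes it below -/
import Mathlib

section
/- Let R be a ring such that every projective left R-module has injective dimension at most 1 and every injective left R-module has projective dimension at most 1 (R is Gorenstein of Gorenstein dimension at most 1). If every left R-module has finite projective dimension (i.e., R has finite global dimension), then every left R-module has projective dimension at most 1 (i.e., R is hereditary). Equivalently: if such a ring R is not hereditary, then its global dimension is infinite. -/
open CategoryTheory

universe u

/-- The `n`-th Ext group `Ext^n_R(X, Y)` of two `R`-modules, computed in the abelian
category of (left) `R`-modules. -/
noncomputable abbrev ExtGroup (R : Type u) [Ring R] (X Y : ModuleCat.{u} R) (n : ℕ) :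
    ModuleCat ℤ :=
  ((Ext ℤ (ModuleCat.{u} R) n).obj (Opposite.op X)).obj Y

/-- A module `M` has projective dimension at most `n` if `Ext^i_R(M, N) = 0`
for every module `N` and every `i > n`. -/
def ProjDimLE (R : Type u) [Ring R] (n : ℕ) (M : ModuleCat.{u} R) : Prop :=
  ∀ (N : ModuleCat.{u} R) (i : ℕ), n < i → Subsingleton (ExtGroup R M N i)

/-- A module `M` has injective dimension at most `n` if `Ext^i_R(N, M) = 0`
for every module `N` and every `i > n`. -/
def InjDimLE (R : Type u) [Ring R] (n : ℕ) (M : ModuleCat.{u} R) : Prop :=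
  ∀ (N : ModuleCat.{u} R) (i : ℕ), n < i → Subsingleton (ExtGroup R N M i)

namespace GorensteinAux

open CategoryTheory Limits

variable {R : Type u} [Ring R]

lemma subsingleton_of_isZero {M : ModuleCat ℤ} (h : IsZero M) : Subsingleton M := by
  refine ⟨fun a b => ?_⟩
  have : (𝟙 M : M ⟶ M) = 0 := by simpa using h.eq_of_src (𝟙 M) 0
  calc a = (𝟙 M : M ⟶ M) a := rfl
  _ = (0 : M ⟶ M) a := by rw [this]
  _ = (𝟙 M : M ⟶ M) b := by rw [this]; rfl
  _ = b := rfl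

/-- The cocycle/coboundary characterization of vanishing of `Ext^{i+1}`. -/
lemma subsingleton_ext_iff (N Y : ModuleCat.{u} R) (Q : ProjectiveResolution N) (i : ℕ) :
    Subsingleton (ExtGroup R N Y (i+1)) ↔
    ∀ (f : Q.complex.X (i+1) ⟶ Y), Q.complex.d (i+2) (i+1) ≫ f = 0 →
      ∃ g : Q.complex.X i ⟶ Y, Q.complex.d (i+1) i ≫ g = f := by
  have e := Q.isoExt (R := ℤ) (i+1) Y
  set C := Q.complex.linearYonedaObj ℤ Y with hC
  have h1 : Subsingleton (ExtGroup R N Y (i+1)) ↔ Subsingleton (C.homology (i+1)) :=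
    Equiv.subsingleton_congr ((forget (ModuleCat ℤ)).mapIso e).toEquiv
  rw [h1]
  have h2 : Subsingleton (C.homology (i+1)) ↔ C.ExactAt (i+1) := by
    rw [HomologicalComplex.exactAt_iff_isZero_homology]
    exact ⟨fun h => ModuleCat.isZero_of_subsingleton _, subsingleton_of_isZero⟩
  rw [h2, HomologicalComplex.exactAt_iff' C i (i+1) (i+2) (by simp) (by simp)]
  rw [ShortComplex.moduleCat_exact_iff]
  have hd : ∀ (j k : ℕ) (f : Q.complex.X j ⟶ Y), (C.d j k) f = Q.complex.d k j ≫ f := by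
    intro j k f
    show ((Q.complex.linearYonedaObj ℤ Y).d j k) f = Q.complex.d k j ≫ f
    simp [ChainComplex.linearYonedaObj]
    rfl
  constructor
  · intro h f hf
    obtain ⟨g, hg⟩ := h f
      (by rw [show ((C.sc' i (i+1) (i+2)).g : _) f = (C.d (i+1) (i+2)) f from rfl, hd]; exact hf)
    exact ⟨g, by rw [← hg]; exact (hd i (i+1) g).symm⟩
  · intro h f hf
    obtain ⟨g, hg⟩ := h f (by rw [← hd (i+1) (i+2) f]; exact hf)
    exact ⟨g, by
      rw [show ((C.sc' i (i+1) (i+2)).f : _) g = (C.d i (i+1)) g from rfl, hd]; exact hg⟩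

/-- The syzygy module: kernel of the canonical projective cover. -/
noncomputable def syz (N : ModuleCat.{u} R) : ModuleCat.{u} R :=
  ModuleCat.of R (LinearMap.ker (Projective.π N).hom)

/-- Inclusion of the syzygy into the projective cover. -/
noncomputable def syzIncl (N : ModuleCat.{u} R) : syz N ⟶ Projective.over N :=
  ModuleCat.ofHom (LinearMap.ker (Projective.π N).hom).subtype

lemma syzIncl_injective (N : ModuleCat.{u} R) : Function.Injective (syzIncl N) :=
  Subtype.val_injective

lemma syzIncl_comp_π (N : ModuleCat.{u} R) : syzIncl N ≫ Projective.π N = 0 := by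
  ext x
  exact (show LinearMap.ker (Projective.π N).hom from x).2

lemma π_surjective (N : ModuleCat.{u} R) : Function.Surjective (Projective.π N) :=
  (ModuleCat.epi_iff_surjective _).1 inferInstance

/-- Objects of the standard syzygy resolution. -/
noncomputable def resX : ℕ → ModuleCat.{u} R → ModuleCat.{u} R
  | 0, N => Projective.over N
  | (n+1), N => resX n (syz N)

/-- Differentials of the standard syzygy resolution. -/
noncomputable def resD : (n : ℕ) → (N : ModuleCat.{u} R) → (resX (n+1) N ⟶ resX n N)
  | 0, N => Projective.π (syz N) ≫ syzIncl N
  | (n+1), N => resD n (syz N)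

lemma resX_projective : ∀ (n : ℕ) (N : ModuleCat.{u} R), Projective (resX n N)
  | 0, N => Projective.projective_over N
  | (n+1), N => resX_projective n (syz N)

lemma resD_comp : ∀ (n : ℕ) (N : ModuleCat.{u} R), resD (n+1) N ≫ resD n N = 0
  | 0, N => by
    show (Projective.π (syz (syz N)) ≫ syzIncl (syz N)) ≫ (Projective.π (syz N) ≫ syzIncl N) = 0
    rw [Category.assoc, ← Category.assoc (syzIncl (syz N)), syzIncl_comp_π, zero_comp, comp_zero]
  | (n+1), N => resD_comp n (syz N)

lemma resD_zero_exact (N : ModuleCat.{u} R) (x : resX 0 N) (hx : Projective.π N x = 0) :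
    ∃ y : resX 1 N, resD 0 N y = x := by
  obtain ⟨y, hy⟩ := π_surjective (syz N) (⟨x, LinearMap.mem_ker.2 hx⟩ : LinearMap.ker (Projective.π N).hom)
  refine ⟨y, ?_⟩
  show (syzIncl N) (Projective.π (syz N) y) = x
  rw [hy]
  rfl

lemma resD_exact : ∀ (n : ℕ) (N : ModuleCat.{u} R) (x : resX (n+1) N), resD n N x = 0 →
    ∃ y : resX (n+2) N, resD (n+1) N y = x
  | 0, N => by
    intro x hx
    have hπ : Projective.π (syz N) x = 0 := by
      apply syzIncl_injective N
      rw [map_zero]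
      exact hx
    exact resD_zero_exact (syz N) x hπ
  | (n+1), N => resD_exact n (syz N)

/-- The complex underlying the standard syzygy resolution. -/
noncomputable def resComplex (N : ModuleCat.{u} R) : ChainComplex (ModuleCat.{u} R) ℕ :=
  ChainComplex.of (fun n => resX n N) (fun n => resD n N) (fun n => resD_comp n N)

lemma resComplex_d (N : ModuleCat.{u} R) (n : ℕ) : (resComplex N).d (n+1) n = resD n N :=
  ChainComplex.of_d (fun n => resX n N) (fun n => resD n N) n

lemma resComplex_d' (N : ModuleCat.{u} R) (n : ℕ) : (resComplex N).d (n+2) (n+1) = resD (n+1) N :=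
  ChainComplex.of_d (fun n => resX n N) (fun n => resD n N) (n+1)

lemma resComplex_X (N : ModuleCat.{u} R) (n : ℕ) : (resComplex N).X n = resX n N := rfl

lemma resComplex_exactAt_succ (N : ModuleCat.{u} R) (n : ℕ) :
    (resComplex N).ExactAt (n+1) := by
  rw [HomologicalComplex.exactAt_iff' _ (n+2) (n+1) n (by simp) (by simp)]
  rw [ShortComplex.moduleCat_exact_iff]
  intro x hx
  have hx' : resD n N x = 0 := by
    rw [show (((resComplex N).sc' (n+2) (n+1) n).g) x = ((resComplex N).d (n+1) n) x from rfl,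
      resComplex_d] at hx
    exact hx
  obtain ⟨y, hy⟩ := resD_exact n N x hx'
  refine ⟨y, ?_⟩
  rw [show (((resComplex N).sc' (n+2) (n+1) n).f) y = ((resComplex N).d (n+2) (n+1)) y from rfl,
    resComplex_d']
  exact hy

/-- The standard syzygy resolution of `N`. -/
noncomputable def myRes (N : ModuleCat.{u} R) : ProjectiveResolution N where
  complex := resComplex N
  projective n := resX_projective n N
  π := (ChainComplex.toSingle₀Equiv _ N).symm ⟨Projective.π N, by
    rw [resComplex_d]
    show (Projective.π (syz N) ≫ syzIncl N) ≫ Projective.π N = 0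
    rw [Category.assoc, syzIncl_comp_π, comp_zero]⟩
  quasiIso := ⟨fun n => by
    cases n with
    | zero =>
      rw [ChainComplex.quasiIsoAt₀_iff, ShortComplex.quasiIso_iff_of_zeros']
      · have hc : resD 0 N ≫ Projective.π N = 0 := by
          show (Projective.π (syz N) ≫ syzIncl N) ≫ Projective.π N = 0
          rw [Category.assoc, syzIncl_comp_π, comp_zero]
        refine (ShortComplex.exact_and_epi_g_iff_of_iso
          (ShortComplex.isoMk (Iso.refl _) (Iso.refl _) (Iso.refl _) ?_ ?_ :
            ShortComplex.mk (resD 0 N) (Projective.π N) hc ≅ _)).2 ⟨?_, ?_⟩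
        · simp [resComplex_d]
        · exact (Category.id_comp _).trans (Category.comp_id _).symm
        · rw [ShortComplex.moduleCat_exact_iff]
          intro x hx
          exact resD_zero_exact N x hx
        · dsimp
          exact (inferInstance : Epi (Projective.π N))
      all_goals rfl
    | succ n =>
      rw [quasiIsoAt_iff_exactAt']
      · exact resComplex_exactAt_succ N n
      · apply ChainComplex.exactAt_succ_single_obj⟩

/-- Dimension shifting along the syzygy sequence. -/
lemma shift (N Y : ModuleCat.{u} R) (i : ℕ) :
    Subsingleton (ExtGroup R N Y (i+2)) ↔ Subsingleton (ExtGroup R (syz N) Y (i+1)) := by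
  rw [show i + 2 = (i+1)+1 from rfl, subsingleton_ext_iff N Y (myRes N) (i+1),
    subsingleton_ext_iff (syz N) Y (myRes (syz N)) i]
  show (∀ (f : (resComplex N).X (i+1+1) ⟶ Y), (resComplex N).d (i+1+2) (i+1+1) ≫ f = 0 →
      ∃ g : (resComplex N).X (i+1) ⟶ Y, (resComplex N).d (i+1+1) (i+1) ≫ g = f) ↔
    (∀ (f : (resComplex (syz N)).X (i+1) ⟶ Y), (resComplex (syz N)).d (i+2) (i+1) ≫ f = 0 →
      ∃ g : (resComplex (syz N)).X i ⟶ Y, (resComplex (syz N)).d (i+1) i ≫ g = f)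
  rw [resComplex_d' N (i+1), resComplex_d N (i+1), resComplex_d' (syz N) i,
    resComplex_d (syz N) i]
  exact Iff.rfl

/-- A retract of a projective module is projective. -/
lemma projective_of_splitEpi {P N : ModuleCat.{u} R} (p : P ⟶ N) [Projective P]
    (s : N ⟶ P) (hs : s ≫ p = 𝟙 N) : Projective N := by
  refine ⟨fun {E X} f e he => ?_⟩
  exact ⟨s ≫ Projective.factorThru (p ≫ f) e, by
    rw [Category.assoc, Projective.factorThru_comp, ← Category.assoc, hs, Category.id_comp]⟩

/-- If `Ext¹(N, -) = 0` then `N` is projective. -/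
lemma projective_of_ext_one (N : ModuleCat.{u} R)
    (h : ∀ Y : ModuleCat.{u} R, Subsingleton (ExtGroup R N Y 1)) : Projective N := by
  have h0 := (subsingleton_ext_iff N (syz N) (myRes N) 0).1 (h (syz N))
  have hcocycle : (resComplex N).d (0+2) (0+1) ≫ Projective.π (syz N) = 0 := by
    rw [resComplex_d' N 0]
    show (Projective.π (syz (syz N)) ≫ syzIncl (syz N)) ≫ Projective.π (syz N) = 0
    rw [Category.assoc, syzIncl_comp_π, comp_zero]
  obtain ⟨g, hg⟩ := h0 (Projective.π (syz N)) hcocycle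
  have hg2 : resD 0 N ≫ g = Projective.π (syz N) := by
    rw [← resComplex_d N 0]
    exact hg
  have hg3 : (Projective.π (syz N) ≫ syzIncl N) ≫ g = Projective.π (syz N) := hg2
  have hr : syzIncl N ≫ g = 𝟙 (syz N) := by
    rw [← cancel_epi (Projective.π (syz N))]
    exact (Category.assoc _ _ _).symm.trans (hg3.trans (Category.comp_id _).symm)
  have hexact : (ShortComplex.mk (syzIncl N) (Projective.π N) (syzIncl_comp_π N)).Exact := by
    rw [ShortComplex.moduleCat_exact_iff]
    intro x hx
    exact ⟨(⟨x, LinearMap.mem_ker.2 hx⟩ : LinearMap.ker (Projective.π N).hom), rfl⟩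
  have hepi : Epi (ShortComplex.mk (syzIncl N) (Projective.π N) (syzIncl_comp_π N)).g := by
    dsimp
    infer_instance
  let sp := ShortComplex.Splitting.ofExactOfRetraction _ hexact g hr hepi
  exact projective_of_splitEpi (Projective.π N) sp.s sp.s_g

/-- Middle vanishing from vanishing at the two ends of
`Ext^{i+2}(X, P) → Ext^{i+2}(X, N) → Ext^{i+3}(X, syz N)`. -/
lemma ext_mid (X N : ModuleCat.{u} R) (i : ℕ)
    (hP : Subsingleton (ExtGroup R X (Projective.over N) (i+2)))
    (hK : Subsingleton (ExtGroup R X (syz N) (i+3))) :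
    Subsingleton (ExtGroup R X N (i+2)) := by
  have hP' := (subsingleton_ext_iff X (Projective.over N) (myRes X) (i+1)).1 hP
  have hK' := (subsingleton_ext_iff X (syz N) (myRes X) (i+2)).1 hK
  refine (subsingleton_ext_iff X N (myRes X) (i+1)).2 ?_
  intro f hf
  haveI : Projective ((myRes X).complex.X (i+1+1)) := (myRes X).projective _
  let f' : (myRes X).complex.X (i+1+1) ⟶ Projective.over N :=
    Projective.factorThru f (Projective.π N)
  have hf' : f' ≫ Projective.π N = f := Projective.factorThru_comp f (Projective.π N)
  have hmem : ∀ c, ((myRes X).complex.d (i+1+2) (i+1+1) ≫ f') c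
      ∈ LinearMap.ker (Projective.π N).hom := by
    intro c
    rw [LinearMap.mem_ker]
    have h1 : ((myRes X).complex.d (i+1+2) (i+1+1) ≫ f' ≫ Projective.π N) c = 0 := by
      rw [hf', hf]
      rfl
    exact h1
  let h : (myRes X).complex.X (i+2+1) ⟶ syz N :=
    ModuleCat.ofHom (LinearMap.codRestrict (LinearMap.ker (Projective.π N).hom)
      ((myRes X).complex.d (i+1+2) (i+1+1) ≫ f').hom hmem)
  have hhincl : h ≫ syzIncl N = (myRes X).complex.d (i+1+2) (i+1+1) ≫ f' := by
    ext c
    rfl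
  haveI hmono : Mono (syzIncl N) :=
    (ModuleCat.mono_iff_injective _).2 (syzIncl_injective N)
  have hhcocycle : (myRes X).complex.d (i+2+2) (i+2+1) ≫ h = 0 := by
    rw [← cancel_mono (syzIncl N), Category.assoc, zero_comp]
    have hhincl2 : h ≫ syzIncl N
        = (myRes X).complex.d (i+2+1) (i+1+1) ≫ f' := hhincl
    rw [hhincl2, ← Category.assoc, HomologicalComplex.d_comp_d, zero_comp]
  obtain ⟨h', hh'⟩ := hK' h hhcocycle
  have hh'2 : (myRes X).complex.d (i+1+2) (i+1+1) ≫ h' = h := hh'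
  let f'' : (myRes X).complex.X (i+1+1) ⟶ Projective.over N := f' - h' ≫ syzIncl N
  have hf''cocycle : (myRes X).complex.d (i+1+2) (i+1+1) ≫ f'' = 0 := by
    show (myRes X).complex.d (i+1+2) (i+1+1) ≫ (f' - h' ≫ syzIncl N) = 0
    rw [Preadditive.comp_sub, ← Category.assoc, hh'2, hhincl, sub_self]
  obtain ⟨g', hg'⟩ := hP' f'' hf''cocycle
  refine ⟨g' ≫ Projective.π N, ?_⟩
  rw [← Category.assoc, hg']
  show (f' - h' ≫ syzIncl N) ≫ Projective.π N = f
  rw [Preadditive.sub_comp, hf', Category.assoc, syzIncl_comp_π, comp_zero, sub_zero]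

end GorensteinAux

/-- Let `R` be Gorenstein of Gorenstein dimension at most 1: every projective module has
injective dimension at most 1 and every injective module has projective dimension at
most 1. If every left `R`-module has finite projective dimension (`R` has finite global
dimension), then every left `R`-module has projective dimension at most 1
(`R` is hereditary). -/
theorem hereditary_of_gorenstein_of_finite_global_dim (R : Type u) [Ring R]
    (hproj : ∀ P : ModuleCat.{u} R, Projective P → InjDimLE R 1 P)
    (hinj : ∀ I : ModuleCat.{u} R, Injective I → ProjDimLE R 1 I)
    (hglob : ∀ M : ModuleCat.{u} R, ∃ m : ℕ, ProjDimLE R m M) :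
    ∀ M : ModuleCat.{u} R, ProjDimLE R 1 M := by
  classical
  have key : ∀ (m : ℕ) (N : ModuleCat.{u} R), ProjDimLE R m N → InjDimLE R 1 N := by
    intro m
    induction m with
    | zero =>
      intro N hN
      have hProj : Projective N :=
        GorensteinAux.projective_of_ext_one N (fun Y => hN Y 1 (by omega))
      exact hproj N hProj
    | succ m ih =>
      intro N hN
      have hsyz : ProjDimLE R m (GorensteinAux.syz N) := by
        intro Y i hi
        obtain ⟨k, rfl⟩ : ∃ k, i = k + 1 := ⟨i - 1, by omega⟩
        exact (GorensteinAux.shift N Y k).1 (hN Y (k+2) (by omega))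
      have h1 : InjDimLE R 1 (GorensteinAux.syz N) := ih (GorensteinAux.syz N) hsyz
      have h2 : InjDimLE R 1 (Projective.over N) := hproj _ (Projective.projective_over N)
      intro X i hi
      obtain ⟨k, rfl⟩ : ∃ k, i = k + 2 := ⟨i - 2, by omega⟩
      exact GorensteinAux.ext_mid X N k (h2 X (k+2) (by omega)) (h1 X (k+3) (by omega))
  intro M N i hi
  obtain ⟨m, hm⟩ := hglob N
  exact key m N hm M i hi
end

section
/- Let R be a ring and M an (R,R)-bimodule, and let R ⋉ M be the trivial square-zero extension. Suppose t ≥ 1 is a natural number such that every product of t elements of the Jacobson radical of R equals zero (i.e., rad(R)^t = 0). Then every product of 2t elements of the Jacobson radical of R ⋉ M equals zero (i.e., rad(R ⋉ M)^{2t} = 0). -/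
universe u v

open TrivSqZeroExt in
private lemma fst_mem_jacobson {R : Type u} [Ring R]
    {M : Type v} [AddCommGroup M] [Module R M] [Module Rᵐᵒᵖ M] [SMulCommClass R Rᵐᵒᵖ M]
    {x : TrivSqZeroExt R M} (hx : x ∈ (⊥ : Ideal (TrivSqZeroExt R M)).jacobson) :
    x.fst ∈ (⊥ : Ideal R).jacobson := by
  rw [Ideal.mem_jacobson_iff] at hx ⊢
  intro y
  obtain ⟨z, hz⟩ := hx (inl y)
  refine ⟨z.fst, ?_⟩
  rw [Ideal.mem_bot] at hz ⊢
  have := congrArg TrivSqZeroExt.fst hz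
  simpa [TrivSqZeroExt.fst_mul] using this

private lemma prod_eq_zero_of_le_length {R : Type u} [Ring R] {t : ℕ}
    (hR : ∀ l : List R, l.length = t → (∀ x ∈ l, x ∈ (⊥ : Ideal R).jacobson) → l.prod = 0)
    (l : List R) (hl : t ≤ l.length) (hmem : ∀ x ∈ l, x ∈ (⊥ : Ideal R).jacobson) :
    l.prod = 0 := by
  have : l = l.take t ++ l.drop t := (List.take_append_drop t l).symm
  rw [this, List.prod_append, hR (l.take t) (by simp [hl])
    (fun x hx => hmem x (List.mem_of_mem_take hx)), zero_mul]

/-- Let `R ⋉ M` be a trivial square-zero extension and `t ≥ 1` a natural number such that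
every product of `t` elements of the Jacobson radical of `R` (the intersection of the
maximal left ideals) is zero, i.e. `rad(R)^t = 0`. Then every product of `2 * t`
elements of the Jacobson radical of `R ⋉ M` is zero, i.e. `rad(R ⋉ M)^(2*t) = 0`. -/
theorem jacobson_trivSqZeroExt_nilpotent (R : Type u) [Ring R]
    (M : Type v) [AddCommGroup M] [Module R M] [Module Rᵐᵒᵖ M] [SMulCommClass R Rᵐᵒᵖ M]
    (t : ℕ) (ht : 1 ≤ t)
    (hR : ∀ l : List R, l.length = t → (∀ x ∈ l, x ∈ (⊥ : Ideal R).jacobson) → l.prod = 0) :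
    ∀ l : List (TrivSqZeroExt R M), l.length = 2 * t →
      (∀ x ∈ l, x ∈ (⊥ : Ideal (TrivSqZeroExt R M)).jacobson) → l.prod = 0 := by
  intro l hlen hmem
  have hmemR : ∀ x ∈ l.map TrivSqZeroExt.fst, x ∈ (⊥ : Ideal R).jacobson := by
    intro x hx
    obtain ⟨y, hy, rfl⟩ := List.mem_map.mp hx
    exact fst_mem_jacobson (hmem y hy)
  ext
  · rw [TrivSqZeroExt.fst_list_prod, TrivSqZeroExt.fst_zero]
    refine prod_eq_zero_of_le_length hR _ ?_ hmemR
    simp [hlen]; omega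
  · rw [TrivSqZeroExt.snd_list_prod, TrivSqZeroExt.snd_zero]
    refine List.sum_eq_zero fun m hm => ?_
    obtain ⟨⟨x, i⟩, hix, rfl⟩ := List.mem_map.mp hm
    rcases lt_or_ge i t with hi | hi
    · have hd : ((l.map TrivSqZeroExt.fst).drop i.succ).prod = 0 := by
        refine prod_eq_zero_of_le_length hR _ ?_
          (fun x hx => hmemR x (List.mem_of_mem_drop hx))
        simp [hlen]; omega
      simp [hd]
    · have htk : ((l.map TrivSqZeroExt.fst).take i).prod = 0 := by
        refine prod_eq_zero_of_le_length hR _ ?_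
          (fun x hx => hmemR x (List.mem_of_mem_take hx))
        simp [hlen]; omega
      simp [htk]
end

section
/- Let A be a left artinian ring and let 𝒰 be a class of finite-length left A-modules that contains the zero module and is closed under isomorphisms, submodules, quotient modules, and extensions. Then there exists an idempotent e ∈ A such that a finite-length left A-module M belongs to 𝒰 if and only if the two-sided ideal AeA annihilates M, i.e., (AeA)•M = 0. (In other words, the Serre subcategories of the category of finite-length A-modules are exactly the subcategories of the form mod A/AeA with e an idempotent of A.) -/
open CategoryTheory

universe u

section serre_aux

variable {A : Type u} [Ring A]

private lemma jac_nilpotent_elem [IsArtinianRing A]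
    {x : A} (hx : x ∈ Ideal.jacobson (⊥ : Ideal A)) : IsNilpotent x := by
  obtain ⟨I, ⟨n, rfl⟩, hmin⟩ := IsArtinian.set_has_minimal
    {I : Ideal A | ∃ n : ℕ, I = Ideal.span {x ^ n}} ⟨Ideal.span {x ^ 0}, 0, rfl⟩
  have hle : Ideal.span {x ^ (n + 1)} ≤ Ideal.span {x ^ n} := by
    refine Ideal.span_le.mpr ?_
    rintro y rfl
    rw [pow_succ']
    exact Submodule.smul_mem _ x (Ideal.subset_span rfl)
  have heq : Ideal.span {x ^ (n + 1)} = Ideal.span {x ^ n} :=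
    le_antisymm hle (by
      by_contra h
      exact hmin _ ⟨n + 1, rfl⟩ (lt_of_le_of_ne hle (fun he => h he.ge)))
  have hmem : x ^ n ∈ Ideal.span {x ^ (n + 1)} := heq.ge (Ideal.subset_span rfl)
  obtain ⟨c, hc⟩ := Submodule.mem_span_singleton.mp hmem
  have hcx : (1 - c * x) * x ^ n = 0 := by
    have : c • x ^ (n + 1) = (c * x) * x ^ n := by
      rw [smul_eq_mul, pow_succ', ← mul_assoc]
    rw [sub_mul, one_mul, ← this, hc, sub_self]
  obtain ⟨s, hs⟩ := Ideal.exists_mul_sub_mem_of_sub_one_mem_jacobson (1 - c * x) (by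
    have : (1 - c * x) - 1 = -(c * x) := by abel
    rw [this]
    exact neg_mem (Submodule.smul_mem _ c hx))
  rw [Ideal.mem_bot, sub_eq_zero] at hs
  refine ⟨n, ?_⟩
  calc x ^ n = (s * (1 - c * x)) * x ^ n := by rw [hs, one_mul]
    _ = s * ((1 - c * x) * x ^ n) := by rw [mul_assoc]
    _ = 0 := by rw [hcx, mul_zero]

private lemma lift_idem [IsArtinianRing A] {a : A}
    (ha : a * a - a ∈ Ideal.jacobson (⊥ : Ideal A)) :
    ∃ e : A, IsIdempotentElem e ∧ e - a ∈ Ideal.jacobson (⊥ : Ideal A) := by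
  set J : Ideal A := Ideal.jacobson (⊥ : Ideal A) with hJ
  have hmr : ∀ {x y : A}, x ∈ J → x * y ∈ J :=
    fun {x y} hx => (Ideal.jacobson (⊥ : Ideal A)).mul_mem_right y hx
  set Jt : TwoSidedIdeal A := (Ideal.jacobson (⊥ : Ideal A)).toTwoSided with hJt
  let f : A →+* Jt.ringCon.Quotient := RingCon.mk' Jt.ringCon
  have hfeq : ∀ {x y : A}, f x = f y ↔ x - y ∈ J := by
    intro x y
    constructor
    · intro h
      have : Jt.ringCon x y := Quotient.eq''.mp h
      have := (TwoSidedIdeal.rel_iff _ _ _).mp this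
      rwa [hJt, Ideal.mem_toTwoSided] at this
    · intro h
      exact Quot.sound ((TwoSidedIdeal.rel_iff _ _ _).mpr (by rw [hJt, Ideal.mem_toTwoSided]; exact h))
  have hker : ∀ x ∈ RingHom.ker f, IsNilpotent x := by
    intro x hx
    rw [RingHom.mem_ker] at hx
    have : x - 0 ∈ J := hfeq.mp (by rw [hx, map_zero])
    exact jac_nilpotent_elem (by simpa using this)
  have hidem : IsIdempotentElem (f a) := by
    show f a * f a = f a
    rw [← map_mul]
    exact hfeq.mpr ha
  obtain ⟨e, he, hfe⟩ := exists_isIdempotentElem_eq_of_ker_isNilpotent f hker (f a) ⟨a, rfl⟩ hidem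
  exact ⟨e, he, hfeq.mp hfe⟩


private lemma isSemisimple_of_isSimple {M : Type*} [AddCommGroup M] [Module A M]
    (h : IsSimpleModule A M) : IsSemisimpleModule A M := by
  haveI := h
  refine IsSemisimpleModule.of_sSup_simples_eq_top (top_unique (le_sSup ?_))
  exact IsSimpleModule.congr (Submodule.topEquiv)

private lemma semisimple_quot [IsArtinianRing A] :
    IsSemisimpleModule A (A ⧸ (Ideal.jacobson (⊥ : Ideal A))) := by
  classical
  set J : Ideal A := Ideal.jacobson (⊥ : Ideal A) with hJdef
  obtain ⟨I0, ⟨s, hs, rfl⟩, hmin⟩ := IsArtinian.set_has_minimal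
    {I : Ideal A | ∃ t : Finset (Ideal A), (∀ m ∈ t, m.IsMaximal) ∧ I = t.inf id}
    ⟨⊤, ∅, by simp, by simp⟩
  have hJI : J ≤ s.inf id := by
    refine Finset.le_inf (fun m hm => ?_)
    exact sInf_le ⟨bot_le, hs m hm⟩
  have hIJ : s.inf id ≤ J := by
    refine le_sInf ?_
    rintro m' ⟨-, hm'⟩
    by_contra hle
    refine hmin ((insert m' s).inf id) ⟨insert m' s, ?_, rfl⟩ ?_
    · intro m hm
      rcases Finset.mem_insert.mp hm with rfl | hm
      · exact hm'
      · exact hs m hm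
    · rw [Finset.inf_insert]
      refine lt_of_le_of_ne inf_le_right (fun he => hle ?_)
      exact le_of_eq_of_le he.symm (by exact inf_le_left)
  have hJeq : s.inf id = J := le_antisymm hIJ hJI
  let φ : A →ₗ[A] ((m : s) → A ⧸ (m.1 : Ideal A)) :=
    LinearMap.pi (fun m => Submodule.mkQ m.1)
  have hker : LinearMap.ker φ = (J : Submodule A A) := by
    ext x
    rw [← hJeq]
    constructor
    · intro hx
      rw [Submodule.mem_finsetInf]
      intro i hi
      have h2 := congr_fun (LinearMap.mem_ker.mp hx) ⟨i, hi⟩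
      simpa [φ, Submodule.Quotient.mk_eq_zero] using h2
    · intro hx
      apply LinearMap.mem_ker.mpr
      funext m
      have h2 : x ∈ m.1 := (Submodule.mem_finsetInf.mp hx) m.1 m.2
      simpa [φ, Submodule.Quotient.mk_eq_zero] using h2
  haveI : ∀ m : s, IsSimpleModule A (A ⧸ (m.1 : Ideal A)) := fun m =>
    isSimpleModule_iff_isCoatom.mpr ((Ideal.isMaximal_def).mp (hs m.1 m.2))
  haveI : IsSemisimpleModule A ((m : s) → A ⧸ (m.1 : Ideal A)) := by
    refine isSemisimpleModule_of_isSemisimpleModule_submodule'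
      (p := fun i => LinearMap.range (LinearMap.single A (fun m : s => A ⧸ (m.1 : Ideal A)) i))
      (fun i => ?_) (LinearMap.iSup_range_single _ _)
    have hinj : Function.Injective (LinearMap.single A (fun m : s => A ⧸ (m.1 : Ideal A)) i) := by
      intro x y hxy
      have := congr_fun (congrArg (fun z => (z : (m : s) → A ⧸ (m.1 : Ideal A))) hxy) i
      simpa using this
    haveI : IsSemisimpleModule A (A ⧸ (i.1 : Ideal A)) := isSemisimple_of_isSimple inferInstance
    exact IsSemisimpleModule.congr (LinearEquiv.ofInjective _ hinj).symm
  have e1 : (A ⧸ (J : Submodule A A)) ≃ₗ[A] (A ⧸ LinearMap.ker φ) :=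
    Submodule.quotEquivOfEq _ _ hker.symm
  have e2 : (A ⧸ LinearMap.ker φ) ≃ₗ[A] LinearMap.range φ := LinearMap.quotKerEquivRange φ
  haveI : IsSemisimpleModule A ↥(LinearMap.range φ) := inferInstance
  exact IsSemisimpleModule.congr (R := A) (M := ↥(LinearMap.range φ))
    (N := A ⧸ (J : Submodule A A)) (e1 ≪≫ₗ e2)


private lemma map_simple_le {M N : Type u} [AddCommGroup M] [AddCommGroup N]
    [Module A M] [Module A N] (f : M →ₗ[A] N) {T : Submodule A M}
    (hT : IsSimpleModule A T) :
    Submodule.map f T = ⊥ ∨ Nonempty (↥T ≃ₗ[A] ↥(Submodule.map f T)) := by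
  haveI := hT
  set g : ↥T →ₗ[A] N := f.comp T.subtype with hg
  have hrange : LinearMap.range g = Submodule.map f T := by
    rw [hg, LinearMap.range_comp, Submodule.range_subtype]
  rcases eq_bot_or_eq_top (LinearMap.ker g) with hk | hk
  · right
    have hinj : Function.Injective g := LinearMap.ker_eq_bot.mp hk
    exact ⟨(LinearEquiv.ofInjective g hinj) ≪≫ₗ LinearEquiv.ofEq _ _ hrange⟩
  · left
    have : g = 0 := LinearMap.ker_eq_top.mp hk
    rw [← hrange, this, LinearMap.range_zero]

private lemma simple_not_le_sSup (𝒰 : ModuleCat.{u} A → Prop)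
    (h_iso : ∀ M N : ModuleCat.{u} A, (M ≅ N) → 𝒰 M → 𝒰 N)
    {B : Type u} [AddCommGroup B] [Module A B]
    (𝒮 : Set (Submodule A B))
    (h𝒮 : ∀ s ∈ 𝒮, IsSimpleModule A s ∧ ¬ 𝒰 (ModuleCat.of A s))
    {T : Submodule A B} (hT : IsSimpleModule A T) (hTU : 𝒰 (ModuleCat.of A T)) :
    ¬ T ≤ sSup 𝒮 := by
  classical
  have key : ∀ F : Finset (Submodule A B),
      (∀ s ∈ F, IsSimpleModule A s ∧ ¬ 𝒰 (ModuleCat.of A s)) →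
      ∀ T : Submodule A B, IsSimpleModule A T → 𝒰 (ModuleCat.of A T) →
      ¬ T ≤ F.sup id := by
    intro F
    induction F using Finset.induction_on with
    | empty =>
      intro _ T hT hTU hle
      rw [Finset.sup_empty, le_bot_iff] at hle
      exact (isSimpleModule_iff_isAtom.mp hT).1 hle
    | @insert s F hsF ih =>
      intro hmem T hT hTU hle
      have hFm : ∀ t ∈ F, IsSimpleModule A t ∧ ¬ 𝒰 (ModuleCat.of A t) :=
        fun t ht => hmem t (Finset.mem_insert_of_mem ht)
      have hsm := hmem s (Finset.mem_insert_self s F)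
      rw [Finset.sup_insert] at hle
      by_cases hTN : T ≤ F.sup id
      · exact ih hFm T hT hTU hTN
      by_cases hsN : s ≤ F.sup id
      · refine ih hFm T hT hTU ?_
        rwa [id, sup_eq_right.mpr hsN] at hle
      set N : Submodule A B := F.sup id with hN
      set π : B →ₗ[A] B ⧸ N := N.mkQ with hπ
      have step : ∀ W : Submodule A B, IsSimpleModule A W → ¬ W ≤ N →
          (Submodule.map π W ≠ ⊥ ∧ Nonempty (↥W ≃ₗ[A] ↥(Submodule.map π W))) := by
        intro W hW hWN
        have hble : Submodule.map π W = ⊥ → W ≤ N := by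
          intro hb x hx
          have h1 : π x ∈ Submodule.map π W := Submodule.mem_map_of_mem hx
          rw [hb, Submodule.mem_bot] at h1
          exact (Submodule.Quotient.mk_eq_zero N).mp h1
        refine ⟨fun hb => hWN (hble hb), ?_⟩
        rcases map_simple_le π hW with h | h
        · exact absurd (hble h) hWN
        · exact h
      obtain ⟨hTb, ⟨eT⟩⟩ := step T hT hTN
      obtain ⟨hsb, ⟨es⟩⟩ := step s hsm.1 hsN
      have hmapN : Submodule.map π N = ⊥ := by
        rw [eq_bot_iff]
        rintro x ⟨y, hy, rfl⟩
        simp only [Submodule.mem_bot, hπ, Submodule.mkQ_apply, Submodule.Quotient.mk_eq_zero]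
        exact hy
      have hmaple : Submodule.map π T ≤ Submodule.map π s := by
        have h2 := Submodule.map_mono (f := π) hle
        rwa [Submodule.map_sup, id, hmapN, sup_bot_eq] at h2
      haveI := hsm.1
      have hatom : IsAtom (Submodule.map π s) :=
        isSimpleModule_iff_isAtom.mp (IsSimpleModule.congr es.symm)
      have heq : Submodule.map π T = Submodule.map π s :=
        (hatom.le_iff.mp hmaple).resolve_left hTb
      have eq2 : ↥T ≃ₗ[A] ↥s := eT ≪≫ₗ LinearEquiv.ofEq _ _ heq ≪≫ₗ es.symm
      exact hsm.2 (h_iso _ _ eq2.toModuleIso hTU)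
  intro hle
  have hTatom := isSimpleModule_iff_isAtom.mp hT
  obtain ⟨x, hxT, hx0⟩ := Submodule.ne_bot_iff T |>.mp hTatom.1
  have hspan : Submodule.span A {x} ≤ T := by
    rw [Submodule.span_le, Set.singleton_subset_iff]; exact hxT
  have hspan_eq : Submodule.span A {x} = T := by
    rcases hTatom.le_iff.mp hspan with h | h
    · exact absurd ((Submodule.span_singleton_eq_bot).mp h) hx0
    · exact h
  have hcmp := Submodule.singleton_span_isCompactElement x (R := A) (M := B)
  rw [sSup_eq_iSup'] at hle
  obtain ⟨F, hF⟩ := CompleteLattice.IsCompactElement.exists_finset_of_le_iSup _ hcmp (fun s : 𝒮 => (s : Submodule A B))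
    (le_trans (hspan_eq ▸ hle) le_rfl)
  have hTF : T ≤ (F.image (fun s : 𝒮 => (s : Submodule A B))).sup id := by
    rw [Finset.sup_image]
    rw [← hspan_eq]
    refine hF.trans ?_
    rw [Finset.sup_eq_iSup]
    exact le_rfl
  refine key (F.image (fun s : 𝒮 => (s : Submodule A B))) ?_ T hT hTU hTF
  intro t ht
  obtain ⟨⟨t', ht'⟩, -, rfl⟩ := Finset.mem_image.mp ht
  exact h𝒮 t' ht'


private lemma exists_submodule_equiv' [IsArtinianRing A]
    (hss : IsSemisimpleModule A (A ⧸ (Ideal.jacobson (⊥ : Ideal A) : Submodule A A)))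
    (S : Type u) [AddCommGroup S] [Module A S] (hS : IsSimpleModule A S) :
    ∃ T : Submodule A (A ⧸ (Ideal.jacobson (⊥ : Ideal A) : Submodule A A)),
      Nonempty (↥T ≃ₗ[A] S) := by
  haveI := hS
  haveI := hss
  haveI : Nontrivial S := IsSimpleModule.nontrivial A S
  obtain ⟨s₀, hs₀⟩ := exists_ne (0 : S)
  set φ : A →ₗ[A] S := LinearMap.toSpanSingleton A S s₀ with hφ
  have hsur : Function.Surjective φ := IsSimpleModule.toSpanSingleton_surjective A hs₀
  have hmax : Ideal.IsMaximal (LinearMap.ker φ) := IsSimpleModule.ker_toSpanSingleton_isMaximal A hs₀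
  have hJle : (Ideal.jacobson (⊥ : Ideal A) : Submodule A A) ≤ LinearMap.ker φ :=
    sInf_le ⟨bot_le, hmax⟩
  set ψ : (A ⧸ (Ideal.jacobson (⊥ : Ideal A) : Submodule A A)) →ₗ[A] S :=
    Submodule.liftQ _ φ hJle with hψ
  have hψsur : Function.Surjective ψ := by
    intro x
    obtain ⟨a, ha⟩ := hsur x
    exact ⟨Submodule.Quotient.mk a, ha⟩
  obtain ⟨C, hC⟩ := exists_isCompl (LinearMap.ker ψ)
  exact ⟨C, ⟨(Submodule.quotientEquivOfIsCompl _ _ hC).symm ≪≫ₗ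
    (ψ.quotKerEquivOfSurjective hψsur)⟩⟩


private lemma serre_simple [IsArtinianRing A]
    (𝒰 : ModuleCat.{u} A → Prop)
    (h_iso : ∀ M N : ModuleCat.{u} A, (M ≅ N) → 𝒰 M → 𝒰 N) :
    ∃ e : A, IsIdempotentElem e ∧
      ∀ (S : Type u) (_ : AddCommGroup S) (_ : Module A S), IsSimpleModule A S →
        (𝒰 (ModuleCat.of A S) ↔ ∀ s : S, e • s = 0) := by
  classical
  set J : Ideal A := Ideal.jacobson (⊥ : Ideal A) with hJdef
  haveI hss : IsSemisimpleModule A (A ⧸ (J : Submodule A A)) := semisimple_quot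
  set 𝒮 : Set (Submodule A (A ⧸ (J : Submodule A A))) :=
    {T | IsSimpleModule A ↥T ∧ ¬ 𝒰 (ModuleCat.of A ↥T)} with h𝒮
  set I : Submodule A (A ⧸ (J : Submodule A A)) := sSup 𝒮 with hIdef
  -- quotient smul facts
  have hsmul : ∀ (a x : A),
      a • (Submodule.Quotient.mk x : A ⧸ (J : Submodule A A)) = Submodule.Quotient.mk (a * x) :=
    fun a x => by rw [← Submodule.Quotient.mk_smul, smul_eq_mul]
  -- J is a two-sided ideal
  have hmulJ : ∀ (y : A), ∀ x ∈ J, x * y ∈ J := fun y x hx =>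
    (Ideal.jacobson (⊥ : Ideal A)).mul_mem_right y hx
  -- right multiplication maps on the quotient
  set ρ : A → ((A ⧸ (J : Submodule A A)) →ₗ[A] (A ⧸ (J : Submodule A A))) :=
    fun r => Submodule.mapQ _ _ (LinearMap.toSpanSingleton A A r)
      (fun x hx => by
        simpa only [Submodule.mem_comap, LinearMap.toSpanSingleton_apply, smul_eq_mul] using hmulJ r x hx) with hρdef
  have hρ : ∀ (r x : A), ρ r (Submodule.Quotient.mk x) = Submodule.Quotient.mk (x * r) := by
    intro r x
    rw [hρdef]
    rw [Submodule.mapQ_apply, LinearMap.toSpanSingleton_apply, smul_eq_mul]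
  -- I is stable under right multiplication
  have hI2 : ∀ (r : A), Submodule.map (ρ r) I ≤ I := by
    intro r
    rw [hIdef, sSup_eq_iSup', Submodule.map_iSup]
    refine iSup_le ?_
    rintro ⟨T, hT1, hT2⟩
    rcases map_simple_le (ρ r) hT1 with h | hne
    · rw [h]; exact bot_le
    · obtain ⟨eqv⟩ := hne
      haveI := hT1
      have hmem : Submodule.map (ρ r) T ∈ 𝒮 :=
        ⟨IsSimpleModule.congr eqv.symm, fun hU => hT2 (h_iso _ _ eqv.symm.toModuleIso hU)⟩
      exact le_iSup (fun a : 𝒮 => (a : Submodule A (A ⧸ (J : Submodule A A)))) ⟨_, hmem⟩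
  -- complement of I
  obtain ⟨K, hIK⟩ := exists_isCompl I
  obtain ⟨f', hf'I, k', hk'K, hfk⟩ := Submodule.mem_sup.mp
    (show (Submodule.Quotient.mk 1 : A ⧸ (J : Submodule A A)) ∈ I ⊔ K by
      rw [hIK.sup_eq_top]; trivial)
  obtain ⟨a₀, ha₀⟩ := Submodule.Quotient.mk_surjective _ f'
  obtain ⟨a₁, ha₁⟩ := Submodule.Quotient.mk_surjective _ k'
  have hu01 : (a₀ + a₁) - 1 ∈ J := by
    refine (Submodule.Quotient.eq (J : Submodule A A)).mp ?_
    rw [Submodule.Quotient.mk_add, ha₀, ha₁, hfk]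
  -- key identity: elements of I are fixed by right multiplication with f'
  have C1 : ∀ y : A, (Submodule.Quotient.mk y : A ⧸ (J : Submodule A A)) ∈ I →
      y • f' = Submodule.Quotient.mk y := by
    intro y hy
    have hdec : (Submodule.Quotient.mk y : A ⧸ (J : Submodule A A)) = y • f' + y • k' := by
      have h1 : y * (a₀ + a₁) - y * 1 ∈ J := by
        have h2 := Submodule.smul_mem (J : Submodule A A) y hu01
        rwa [smul_eq_mul, mul_sub] at h2
      have h3 : (Submodule.Quotient.mk y : A ⧸ (J : Submodule A A)) =
          Submodule.Quotient.mk (y * (a₀ + a₁)) := by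
        rw [Submodule.Quotient.eq]
        simpa [mul_one] using (neg_mem h1 : -(y * (a₀ + a₁) - y * 1) ∈ J)
      rw [h3, mul_add, Submodule.Quotient.mk_add, ← hsmul, ← hsmul, ha₀, ha₁]
    have h4 : (Submodule.Quotient.mk y : A ⧸ (J : Submodule A A)) - y • f' ∈ I ⊓ K := by
      constructor
      · exact Submodule.sub_mem I hy (Submodule.smul_mem I y hf'I)
      · rw [hdec]
        simpa using Submodule.smul_mem K y hk'K
    rw [hIK.inf_eq_bot, Submodule.mem_bot, sub_eq_zero] at h4
    exact h4.symm
  -- a₀ is idempotent mod J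
  have ha₀J : a₀ * a₀ - a₀ ∈ J := by
    have h5 := C1 a₀ (by rw [ha₀]; exact hf'I)
    rw [← ha₀, hsmul] at h5
    exact (Submodule.Quotient.eq (J : Submodule A A)).mp h5
  obtain ⟨e, he, heJ⟩ := lift_idem ha₀J
  have hfe : (Submodule.Quotient.mk e : A ⧸ (J : Submodule A A)) = f' := by
    rw [← ha₀]
    exact (Submodule.Quotient.eq (J : Submodule A A)).mpr heJ
  refine ⟨e, he, ?_⟩
  intro S _ _ hS
  haveI := hS
  obtain ⟨T, ⟨χ⟩⟩ := exists_submodule_equiv' hss S hS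
  have hTsimple : IsSimpleModule A ↥T := IsSimpleModule.congr χ
  constructor
  · -- 𝒰 S → e kills S
    intro hU s
    have hTU : 𝒰 (ModuleCat.of A ↥T) := h_iso _ _ χ.symm.toModuleIso hU
    have hTI : T ⊓ I = ⊥ := by
      rcases (isSimpleModule_iff_isAtom.mp hTsimple).le_iff.mp
        (inf_le_left : T ⊓ I ≤ T) with h | h
      · exact h
      · exfalso
        have hTle : T ≤ I := h ▸ inf_le_right
        rw [hIdef] at hTle
        exact simple_not_le_sSup 𝒰 h_iso 𝒮 (fun s hs => hs) hTsimple hTU hTle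
    have hkill : ∀ t ∈ T, e • t = (0 : A ⧸ (J : Submodule A A)) := by
      intro t ht
      obtain ⟨y, hy⟩ := Submodule.Quotient.mk_surjective _ t
      have h2 : a₀ • t ∈ I := by
        have h3 : a₀ • t = ρ y f' := by rw [← hy, ← ha₀, hρ, hsmul]
        rw [h3]
        exact hI2 y (Submodule.mem_map_of_mem hf'I)
      have h3 : a₀ • t = 0 := by
        have h4 : a₀ • t ∈ T ⊓ I := ⟨Submodule.smul_mem T a₀ ht, h2⟩
        rwa [hTI, Submodule.mem_bot] at h4
      have h5 : e • t = a₀ • t := by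
        rw [← hy, hsmul, hsmul, Submodule.Quotient.eq]
        have h6 : (e - a₀) * y ∈ J := by
          refine hmulJ y _ ?_
          exact heJ
        rwa [sub_mul] at h6
      rw [h5, h3]
    have h7 : e • (χ.symm s) = 0 := by
      have h8 : e • ((χ.symm s : A ⧸ (J : Submodule A A))) = 0 := hkill _ (χ.symm s).2
      exact Subtype.ext (by simpa using h8)
    calc e • s = χ (e • χ.symm s) := by rw [map_smul, χ.apply_symm_apply]
      _ = 0 := by rw [h7, map_zero]
  · -- e kills S → 𝒰 S
    intro hkillS
    by_contra hU
    have hTU : ¬ 𝒰 (ModuleCat.of A ↥T) := fun h => hU (h_iso _ _ χ.toModuleIso h)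
    have hTle : T ≤ I := by
      rw [hIdef]
      exact le_sSup (show T ∈ 𝒮 from ⟨hTsimple, hTU⟩)
    have hkT : ∀ t ∈ T, e • t = (0 : A ⧸ (J : Submodule A A)) := by
      intro t ht
      have h9 : χ (e • (⟨t, ht⟩ : ↥T)) = 0 := by rw [map_smul, hkillS]
      have h10 : e • (⟨t, ht⟩ : ↥T) = 0 := by
        apply χ.injective
        rw [h9, map_zero]
      have h11 := congrArg (Subtype.val) h10
      simpa using h11
    obtain ⟨C, hTC⟩ := exists_isCompl T
    obtain ⟨c₁, hc₁, c₂, hc₂, hcc⟩ := Submodule.mem_sup.mp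
      (show (Submodule.Quotient.mk 1 : A ⧸ (J : Submodule A A)) ∈ T ⊔ C by
        rw [hTC.sup_eq_top]; trivial)
    obtain ⟨u₁, hu₁⟩ := Submodule.Quotient.mk_surjective _ c₁
    obtain ⟨u₂, hu₂⟩ := Submodule.Quotient.mk_surjective _ c₂
    have hbot : T = ⊥ := by
      rw [eq_bot_iff]
      intro t ht
      obtain ⟨y, hy⟩ := Submodule.Quotient.mk_surjective _ t
      have h6 : t = Submodule.Quotient.mk (y * e) := by
        have h12 := C1 y (by rw [hy]; exact hTle ht)
        rw [← hfe, hsmul] at h12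
        rw [← hy, ← h12]
      have hu12 : (u₁ + u₂) - 1 ∈ J := by
        refine (Submodule.Quotient.eq (J : Submodule A A)).mp ?_
        rw [Submodule.Quotient.mk_add, hu₁, hu₂, hcc]
      have h7 : t = Submodule.Quotient.mk (y * e * u₁) + Submodule.Quotient.mk (y * e * u₂) := by
        rw [h6, ← Submodule.Quotient.mk_add, Submodule.Quotient.eq]
        have h13 := Submodule.smul_mem (J : Submodule A A) (y * e) hu12
        rw [smul_eq_mul, mul_sub, mul_one, mul_add] at h13
        simpa using (neg_mem h13 : _)
      have h8 : Submodule.Quotient.mk (y * e * u₁) = (0 : A ⧸ (J : Submodule A A)) := by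
        have he1 : e • c₁ = 0 := hkT c₁ hc₁
        have h14 : Submodule.Quotient.mk (y * e * u₁) =
            y • (e • (Submodule.Quotient.mk u₁ : A ⧸ (J : Submodule A A))) := by
          rw [hsmul, hsmul, ← mul_assoc]
        rw [h14, hu₁, he1, smul_zero]
      have h15 : Submodule.Quotient.mk (y * e * u₂) ∈ C := by
        have h16 : (Submodule.Quotient.mk (y * e * u₂) : A ⧸ (J : Submodule A A)) =
            (y * e) • c₂ := by rw [← hu₂, hsmul]
        rw [h16]
        exact Submodule.smul_mem _ _ hc₂
      have h17 : t ∈ C := by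
        rw [h7, h8, zero_add]
        exact h15
      have h18 : t = 0 := Submodule.disjoint_def.mp hTC.disjoint t ht h17
      simp [h18]
    exact (isSimpleModule_iff_isAtom.mp hTsimple).1 hbot


end serre_aux

/-- Let `A` be a left artinian ring and `𝒰` a class of finite-length left `A`-modules
containing the zero module and closed under isomorphisms, submodules, quotient modules
and extensions (a Serre subcategory of the category of finite-length modules). Then
there is an idempotent `e ∈ A` such that a finite-length module `M` belongs to `𝒰` if
and only if the two-sided ideal `AeA` annihilates `M`, i.e. `(a * e * b) • m = 0` for
all `a b : A` and `m : M`. -/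
theorem serre_class_eq_modules_killed_by_idempotent (A : Type u) [Ring A]
    [IsArtinianRing A]
    (𝒰 : ModuleCat.{u} A → Prop)
    (h_fl : ∀ M : ModuleCat.{u} A, 𝒰 M → IsFiniteLength A M)
    (h_zero : 𝒰 (ModuleCat.of A PUnit))
    (h_iso : ∀ M N : ModuleCat.{u} A, (M ≅ N) → 𝒰 M → 𝒰 N)
    (h_sub : ∀ (M : ModuleCat.{u} A) (p : Submodule A M), 𝒰 M → 𝒰 (ModuleCat.of A p))
    (h_quot : ∀ (M : ModuleCat.{u} A) (p : Submodule A M), 𝒰 M → 𝒰 (ModuleCat.of A (M ⧸ p)))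
    (h_ext : ∀ (X Y Z : ModuleCat.{u} A) (f : X →ₗ[A] Y) (g : Y →ₗ[A] Z),
      Function.Injective f → Function.Surjective g → Function.Exact f g →
      𝒰 X → 𝒰 Z → 𝒰 Y) :
    ∃ e : A, IsIdempotentElem e ∧
      ∀ M : ModuleCat.{u} A, IsFiniteLength A M →
        (𝒰 M ↔ ∀ (a b : A) (m : M), (a * e * b) • m = 0) := by
  classical
  obtain ⟨e, he, hsimple⟩ := serre_simple 𝒰 h_iso
  -- subsingleton modules are in 𝒰
  have hU0 : ∀ (X : Type u) (_ : AddCommGroup X) (_ : Module A X), Subsingleton X →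
      𝒰 (ModuleCat.of A X) := by
    intro X _ _ hX
    refine h_iso (ModuleCat.of A PUnit) _ (LinearEquiv.toModuleIso ?_) h_zero
    exact
      { toFun := fun _ => (0 : X)
        invFun := fun _ => PUnit.unit
        map_add' := fun _ _ => by simp
        map_smul' := fun _ _ => by simp
        left_inv := fun x => Subsingleton.elim _ _
        right_inv := fun x => Subsingleton.elim _ _ }
  refine ⟨e, he, ?_⟩
  intro M hM
  have hNA := isFiniteLength_iff_isNoetherian_isArtinian.mp hM
  haveI hNoeth : IsNoetherian A M := hNA.1
  haveI hArt : IsArtinian A M := hNA.2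
  -- step: find a cover of p with simple quotient layer
  have hstep : ∀ p : Submodule A M, p ≠ ⊤ →
      ∃ q : Submodule A M, p < q ∧ IsSimpleModule A ↥(Submodule.map p.mkQ q) := by
    intro p hp
    haveI : Nontrivial (M ⧸ p) := Submodule.Quotient.nontrivial_iff.mpr hp
    haveI : IsAtomic (Submodule A (M ⧸ p)) := isAtomic_of_orderBot_wellFounded_lt wellFounded_lt
    obtain ⟨a, ha⟩ : ∃ a : Submodule A (M ⧸ p), IsAtom a := by
      rcases IsAtomic.eq_bot_or_exists_atom_le (⊤ : Submodule A (M ⧸ p)) with h | ⟨a, ha, -⟩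
      · obtain ⟨x, hx⟩ := exists_ne (0 : M ⧸ p)
        exact absurd ((Submodule.mem_bot _).mp (h ▸ Submodule.mem_top (x := x))) hx
      · exact ⟨a, ha⟩
    refine ⟨Submodule.comap p.mkQ a, ?_, ?_⟩
    · have hle : p ≤ Submodule.comap p.mkQ a := by
        intro x hx
        show p.mkQ x ∈ a
        rw [Submodule.mkQ_apply, (Submodule.Quotient.mk_eq_zero p).mpr hx]
        exact a.zero_mem
      refine lt_of_le_of_ne hle (fun heq => ?_)
      have hmap : Submodule.map p.mkQ (Submodule.comap p.mkQ a) = a := by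
        rw [Submodule.map_comap_eq, Submodule.range_mkQ, top_inf_eq]
      rw [← heq] at hmap
      have : Submodule.map p.mkQ p = ⊥ := by
        rw [eq_bot_iff]
        rintro x ⟨y, hy, rfl⟩
        simp only [Submodule.mem_bot, Submodule.mkQ_apply, Submodule.Quotient.mk_eq_zero]
        exact hy
      exact ha.1 (by rw [← hmap, this])
    · have hmap : Submodule.map p.mkQ (Submodule.comap p.mkQ a) = a := by
        rw [Submodule.map_comap_eq, Submodule.range_mkQ, top_inf_eq]
      rw [hmap]
      exact isSimpleModule_iff_isAtom.mpr ha
  constructor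
  · -- 𝒰 M → killed
    intro hUM
    have H : ∀ p : Submodule A M, ∀ x : M ⧸ p, e • x = 0 := by
      intro p0
      refine wellFounded_gt.induction
        (C := fun p => ∀ x : M ⧸ p, e • x = 0) p0 ?_
      intro p ih
      by_cases hp : p = ⊤
      · subst hp
        intro x
        obtain ⟨y, rfl⟩ := Submodule.Quotient.mk_surjective _ x
        rw [show (Submodule.Quotient.mk y : M ⧸ (⊤ : Submodule A M)) = 0 from
          (Submodule.Quotient.mk_eq_zero _).mpr trivial, smul_zero]
      · obtain ⟨q, hpq, hsimp⟩ := hstep p hp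
        intro x
        set eqv := Submodule.quotientQuotientEquivQuotient p q hpq.le with heqv
        have hx1 : e • ((Submodule.map p.mkQ q).mkQ x) = 0 := by
          apply eqv.injective
          rw [map_smul, map_zero]
          exact ih q hpq _
        have hx2 : e • x ∈ Submodule.map p.mkQ q := by
          have : (Submodule.map p.mkQ q).mkQ (e • x) = 0 := by
            rw [map_smul]; exact hx1
          rwa [Submodule.mkQ_apply, Submodule.Quotient.mk_eq_zero] at this
        -- the simple layer is in 𝒰, hence killed by e
        have hUa : 𝒰 (ModuleCat.of A ↥(Submodule.map p.mkQ q)) :=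
          h_sub (ModuleCat.of A (M ⧸ p)) (Submodule.map p.mkQ q) (h_quot M p hUM)
        have hkill := (hsimple ↥(Submodule.map p.mkQ q) _ _ hsimp).mp hUa
        have h3 : e • (e • x) = 0 := by
          have h4 := hkill ⟨e • x, hx2⟩
          have h5 := congrArg Subtype.val h4
          simpa using h5
        calc e • x = (e * e) • x := by rw [he.eq]
          _ = e • (e • x) := by rw [mul_smul]
          _ = 0 := h3
    have hek : ∀ m : M, e • m = 0 := by
      intro m
      have h6 := H ⊥ (Submodule.Quotient.mk m)
      rw [← Submodule.Quotient.mk_smul, Submodule.Quotient.mk_eq_zero] at h6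
      simpa using h6
    intro a b m
    rw [mul_smul, mul_smul, hek, smul_zero]
  · -- killed → 𝒰 M
    intro hann
    have hek : ∀ m : M, e • m = 0 := by
      intro m
      have := hann 1 1 m
      simpa using this
    have H : ∀ p : Submodule A M, 𝒰 (ModuleCat.of A ((M : Type u) ⧸ p)) := by
      intro p0
      refine wellFounded_gt.induction
        (C := fun p => 𝒰 (ModuleCat.of A ((M : Type u) ⧸ p))) p0 ?_
      intro p ih
      by_cases hp : p = ⊤
      · refine hU0 _ _ _ ?_
        subst hp
        refine subsingleton_of_forall_eq 0 (fun x => ?_)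
        obtain ⟨y, rfl⟩ := Submodule.Quotient.mk_surjective _ x
        exact (Submodule.Quotient.mk_eq_zero _).mpr trivial
      · obtain ⟨q, hpq, hsimp⟩ := hstep p hp
        set eqv := Submodule.quotientQuotientEquivQuotient p q hpq.le with heqv
        have hkillq : ∀ z : M ⧸ p, e • z = 0 := by
          intro z
          obtain ⟨y, rfl⟩ := Submodule.Quotient.mk_surjective _ z
          rw [← Submodule.Quotient.mk_smul, hek, Submodule.Quotient.mk_eq_zero]
          exact p.zero_mem
        have hUa : 𝒰 (ModuleCat.of A ↥(Submodule.map p.mkQ q)) := by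
          refine (hsimple ↥(Submodule.map p.mkQ q) _ _ hsimp).mpr (fun s => ?_)
          refine Subtype.ext ?_
          simpa using hkillq (s : M ⧸ p)
        have hUZ : 𝒰 (ModuleCat.of A ((M ⧸ p) ⧸ (Submodule.map p.mkQ q))) :=
          h_iso _ _ eqv.symm.toModuleIso (ih q hpq)
        have hexact : Function.Exact ((Submodule.map p.mkQ q).subtype)
            ((Submodule.map p.mkQ q).mkQ) := by
          rw [LinearMap.exact_iff, Submodule.ker_mkQ, Submodule.range_subtype]
        exact h_ext (ModuleCat.of A ↥(Submodule.map p.mkQ q)) (ModuleCat.of A (M ⧸ p))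
          (ModuleCat.of A ((M ⧸ p) ⧸ (Submodule.map p.mkQ q)))
          ((Submodule.map p.mkQ q).subtype) ((Submodule.map p.mkQ q).mkQ)
          (Submodule.injective_subtype _) (Submodule.mkQ_surjective _) hexact hUa hUZ
    have hfin := H ⊥
    refine h_iso _ _ ?_ hfin
    exact (Submodule.quotEquivOfEqBot (⊥ : Submodule A M) rfl).toModuleIso ≪≫
      (Iso.refl _ : ModuleCat.of A M ≅ M)
end
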